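/- Let G be an n × n invertible matrix over a finite field F such that for some invertible diagonal matrix M, the matrix B = G M G^T satisfies B_{i,j} = 0 whenever i + j ≤ n and B_{i,j} ≠ 0 whenever i + j = n + 1. Then for each 0 ≤ i ≤ n, the row space C_i of the first i rows of G and the row space C_{n-i} of the first n - i rows satisfy: C_{n-i} · M is the orthogonal complement of C_i in F^n (with respect to the standard bilinear form). -/

import Mathlib

/-- Orthogonal complement of a subspace of `ι → F` with respect to the standard
bilinear form `⟨x, y⟩ = ∑ k, x k * y k`. -/
def orthComp {F : Type} [Field F] {ι : Type} [Fintype ι]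
    (W : Submodule F (ι → F)) : Submodule F (ι → F) where
  carrier := {x | ∀ y ∈ W, ∑ k, x k * y k = 0}
  zero_mem' := by intro y hy; simp
  add_mem' := by
    intro a b ha hb y hy
    have h : (∑ k, a k * y k) + (∑ k, b k * y k) = 0 := by
      rw [ha y hy, hb y hy, add_zero]
    simpa [add_mul, Finset.sum_add_distrib] using h
  smul_mem' := by
    intro c x hx y hy
    have h := hx y hy
    simp only [Set.mem_setOf_eq, Pi.smul_apply, smul_eq_mul, mul_assoc]
    rw [← Finset.mul_sum, h, mul_zero]

/-- Right multiplication of a row vector by the diagonal matrix `diag v`,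
as a linear map. -/
def diagMap {F : Type} [Field F] {ι : Type} [Fintype ι] (v : ι → F) :
    (ι → F) →ₗ[F] (ι → F) :=
  LinearMap.pi fun k => v k • LinearMap.proj k


section Aux

variable {F : Type} [Field F] {n : ℕ}

/-- The standard dot-product bilinear form. -/
noncomputable def dotForm (F : Type) [Field F] (n : ℕ) :
    LinearMap.BilinForm F (Fin n → F) :=
  Matrix.toBilin' (1 : Matrix (Fin n) (Fin n) F)

lemma dotForm_apply (x y : Fin n → F) : dotForm F n x y = ∑ k, x k * y k := by
  simp [dotForm, Matrix.toBilin'_apply', dotProduct]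

lemma dotForm_nondegenerate : (dotForm F n).Nondegenerate :=
  LinearMap.BilinForm.nondegenerate_toBilin'_of_det_ne_zero' _ (by simp)

lemma dotForm_isRefl : (dotForm F n).IsRefl := by
  intro x y h
  rw [dotForm_apply] at h ⊢
  rw [← h]
  exact Finset.sum_congr rfl fun k _ => mul_comm _ _

lemma orthComp_eq_orthogonal (W : Submodule F (Fin n → F)) :
    orthComp W = (dotForm F n).orthogonal W := by
  ext x
  rw [LinearMap.BilinForm.mem_orthogonal_iff]
  constructor
  · intro h y hy
    have := h y hy
    rw [dotForm_apply, ← this]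
    exact Finset.sum_congr rfl fun k _ => mul_comm _ _
  · intro h y hy
    have := h y hy
    rw [dotForm_apply] at this
    rw [← this]
    exact Finset.sum_congr rfl fun k _ => mul_comm _ _

lemma finrank_orthComp (W : Submodule F (Fin n → F)) :
    Module.finrank F (orthComp W) = n - Module.finrank F W := by
  rw [orthComp_eq_orthogonal,
    LinearMap.BilinForm.finrank_orthogonal dotForm_nondegenerate]
  simp

lemma diagMap_injective (v : Fin n → F) (hv : ∀ k, v k ≠ 0) :
    Function.Injective (diagMap (F := F) v) := by
  rw [← LinearMap.ker_eq_bot]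
  ext x
  simp only [LinearMap.mem_ker, Submodule.mem_bot]
  constructor
  · intro h
    funext k
    have := congrFun h k
    simp [diagMap] at this
    rcases this with h | h
    · exact absurd h (hv k)
    · exact h
  · rintro rfl; simp

lemma finrank_span_rows (G : Matrix (Fin n) (Fin n) F) (hG : IsUnit G.det)
    (i : ℕ) (hi : i ≤ n) :
    Module.finrank F (Submodule.span F {x | ∃ k : Fin n, (k : ℕ) < i ∧ x = G k}) = i := by
  have hli : LinearIndependent F (fun k : Fin n => G k) :=
    Matrix.linearIndependent_rows_iff_isUnit.2 ((Matrix.isUnit_iff_isUnit_det G).2 hG)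
  have hinj : Function.Injective (Fin.castLE hi) := Fin.castLE_injective hi
  have hli' : LinearIndependent F (fun j : Fin i => G (Fin.castLE hi j)) :=
    hli.comp _ hinj
  have hset : {x | ∃ k : Fin n, (k : ℕ) < i ∧ x = G k} =
      Set.range (fun j : Fin i => G (Fin.castLE hi j)) := by
    ext x
    constructor
    · rintro ⟨k, hk, rfl⟩
      exact ⟨⟨k, hk⟩, rfl⟩
    · rintro ⟨j, rfl⟩
      exact ⟨Fin.castLE hi j, j.isLt, rfl⟩
  rw [hset, finrank_span_eq_card hli']
  simp

end Aux

lemma mem_orthComp_span {F : Type} [Field F] {n : ℕ} {s : Set (Fin n → F)} {x : Fin n → F}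
    (h : ∀ y ∈ s, ∑ k, x k * y k = 0) : x ∈ orthComp (Submodule.span F s) := by
  have hker : Submodule.span F s ≤ LinearMap.ker (dotForm F n x) := by
    rw [Submodule.span_le]
    intro y hy
    simpa [dotForm_apply] using h y hy
  intro y hy
  simpa [dotForm_apply] using hker hy

/-- If `G` is invertible and `B = G (diag v) Gᵀ` is zero above the anti-diagonal and
nonzero on it (rows/columns numbered `1, …, n`), then for each `0 ≤ i ≤ n` the image
under `diag v` of the span `C_{n-i}` of the first `n - i` rows of `G` is the orthogonal
complement of the span `C_i` of the first `i` rows. -/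
theorem flag_isometry_dual_of_antidiagonal {F : Type} [Field F] [Fintype F] {n : ℕ}
    (G : Matrix (Fin n) (Fin n) F) (hG : IsUnit G.det)
    (v : Fin n → F) (hv : ∀ k, v k ≠ 0)
    (hzero : ∀ i j : Fin n, (i : ℕ) + (j : ℕ) + 2 ≤ n →
      (G * Matrix.diagonal v * G.transpose) i j = 0)
    (hpivot : ∀ i j : Fin n, (i : ℕ) + (j : ℕ) + 2 = n + 1 →
      (G * Matrix.diagonal v * G.transpose) i j ≠ 0) :
    ∀ i : ℕ, i ≤ n →
      Submodule.map (diagMap v)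
          (Submodule.span F {x | ∃ k : Fin n, (k : ℕ) < n - i ∧ x = G k}) =
        orthComp (Submodule.span F {x | ∃ k : Fin n, (k : ℕ) < i ∧ x = G k}) := by
  intro i hi
  set S1 : Set (Fin n → F) := {x | ∃ k : Fin n, (k : ℕ) < n - i ∧ x = G k} with hS1
  set S2 : Set (Fin n → F) := {x | ∃ k : Fin n, (k : ℕ) < i ∧ x = G k} with hS2
  have hle : Submodule.map (diagMap v) (Submodule.span F S1) ≤
      orthComp (Submodule.span F S2) := by
    rw [Submodule.map_span, Submodule.span_le]
    rintro x ⟨x', ⟨k, hk, rfl⟩, rfl⟩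
    apply mem_orthComp_span
    rintro y ⟨l, hl, rfl⟩
    have hB : (G * Matrix.diagonal v * G.transpose) k l = 0 := hzero k l (by omega)
    have hBval : (G * Matrix.diagonal v * G.transpose) k l = ∑ j, G k j * v j * G l j := by
      rw [Matrix.mul_apply]
      refine Finset.sum_congr rfl fun j _ => ?_
      rw [Matrix.mul_diagonal, Matrix.transpose_apply]
    rw [← hB, hBval]
    refine Finset.sum_congr rfl fun j _ => ?_
    simp only [diagMap, LinearMap.pi_apply, LinearMap.smul_apply, LinearMap.proj_apply,
      smul_eq_mul]
    ring
  apply Submodule.eq_of_le_of_finrank_eq hle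
  have h1 : Module.finrank F (Submodule.map (diagMap v) (Submodule.span F S1)) =
      Module.finrank F (Submodule.span F S1) :=
    (Submodule.equivMapOfInjective (diagMap v) (diagMap_injective v hv) _).finrank_eq.symm
  rw [h1, finrank_span_rows G hG (n - i) (Nat.sub_le n i), finrank_orthComp,
    finrank_span_rows G hG i hi]
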